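/- Let k be a field of characteristic zero and set f = X·(X·Y−1) ∈ k[X,Y]. There is a k-algebra isomorphism ψ from the localization k[X,Y][1/f] onto the Laurent polynomial ring (k[X,Y]/(f−1))[T,T⁻¹] over the quotient ring k[X,Y]/(f−1), such that ψ sends the image of f to the Laurent variable T. (Equivalently, over 𝔾_{m,k} the map f is a trivial fibration with fiber the fiber X₁ of f over 1: X_η ≅ X₁ ×_k 𝔾_{m,k}, compatibly with f.) -/

import Mathlib

open MvPolynomial LaurentPolynomial

set_option maxHeartbeats 1000000
set_option synthInstance.maxHeartbeats 400000

namespace BroughtonAux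

noncomputable section

variable (k : Type) [Field k]

/-- Broughton's polynomial. -/
abbrev f : MvPolynomial (Fin 2) k := X 0 * (X 0 * X 1 - 1)

abbrev A := MvPolynomial (Fin 2) k
abbrev Aloc := Localization.Away (f k)
abbrev B := A k ⧸ Ideal.span {f k - 1}
abbrev L := LaurentPolynomial (B k)

/-- image of X 0 in B -/
abbrev u : B k := Ideal.Quotient.mk _ (X 0)
abbrev v : B k := Ideal.Quotient.mk _ (X 1)

lemma mk_f : (Ideal.Quotient.mk (Ideal.span {f k - 1}) (f k)) = 1 := by
  rw [show (1 : B k) = Ideal.Quotient.mk _ 1 from rfl, Ideal.Quotient.eq]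
  exact Ideal.mem_span_singleton_self _

/-- The map `A → B[T,T⁻¹]`, `X ↦ T·u`, `Y ↦ T⁻¹·v`. -/
def psi0 : A k →ₐ[k] L k :=
  aeval ![T 1 * LaurentPolynomial.C (u k), T (-1) * LaurentPolynomial.C (v k)]

lemma T_one_mul_T_neg_one : (T 1 : L k) * T (-1) = 1 := by
  rw [← T_add]; norm_num

lemma psi0_f : psi0 k (f k) = T 1 := by
  have h1 := T_one_mul_T_neg_one k
  have hB : u k * (u k * v k - 1) = (1 : B k) := by
    simpa only [f, map_mul, map_sub, map_one] using mk_f k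
  have h2 : LaurentPolynomial.C (u k) *
      (LaurentPolynomial.C (u k) * LaurentPolynomial.C (v k) - 1) = 1 := by
    rw [← map_mul, show (1 : L k) = LaurentPolynomial.C 1 from rfl, ← map_sub, ← map_mul, hB]
  simp only [psi0, f, map_mul, map_sub, map_one, aeval_X, Matrix.cons_val_zero,
    Matrix.cons_val_one, Matrix.head_cons]
  linear_combination (T 1 * LaurentPolynomial.C (u k) * LaurentPolynomial.C (u k) *
    LaurentPolynomial.C (v k)) * h1 + (T 1 : L k) * h2

/-- The localized map `ψ : A[1/f] → B[T,T⁻¹]`. -/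
def psi : Aloc k →+* L k :=
  IsLocalization.Away.lift (S := Aloc k) (P := L k) (f k)
    (g := (psi0 k).toRingHom) (show IsUnit ((psi0 k).toRingHom (f k)) by
                                  rw [AlgHom.toRingHom_eq_coe, RingHom.coe_coe, psi0_f]
                                  exact isUnit_T 1)

lemma psi_algebraMap (a : A k) :
    psi k (algebraMap (A k) (Aloc k) a) = psi0 k a :=
  IsLocalization.Away.lift_eq _ _ _

abbrev fimg : Aloc k := algebraMap (A k) (Aloc k) (f k)
abbrev finv : Aloc k := IsLocalization.Away.invSelf (S := Aloc k) (f k)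

lemma fmul : fimg k * finv k = 1 := IsLocalization.Away.mul_invSelf _

/-- `f` as a unit of the localization. -/
def fu : (Aloc k)ˣ :=
  ⟨fimg k, finv k, fmul k, by rw [mul_comm]; exact fmul k⟩

/-- The map `A → A[1/f]`, `X ↦ f⁻¹·X`, `Y ↦ f·Y`. -/
def beta : A k →ₐ[k] Aloc k :=
  aeval ![finv k * algebraMap (A k) (Aloc k) (X 0),
          fimg k * algebraMap (A k) (Aloc k) (X 1)]

lemma beta_f : beta k (f k) = 1 := by
  have h : (algebraMap (A k) (Aloc k) (X 0) *
      (algebraMap (A k) (Aloc k) (X 0) * algebraMap (A k) (Aloc k) (X 1) - 1)) * finv k = 1 := by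
    rw [show algebraMap (A k) (Aloc k) (X 0) *
        (algebraMap (A k) (Aloc k) (X 0) * algebraMap (A k) (Aloc k) (X 1) - 1) = fimg k by
      simp [f, map_mul, map_sub, map_one]]
    exact fmul k
  simp only [beta, f, map_mul, map_sub, map_one, aeval_X, Matrix.cons_val_zero,
    Matrix.cons_val_one, Matrix.head_cons, fimg]
  set x0 := algebraMap (A k) (Aloc k) (X 0 : A k)
  set x1 := algebraMap (A k) (Aloc k) (X 1 : A k)
  linear_combination (finv k * x0 * x0 * x1 + 1) * h

lemma beta_f_sub_one : beta k (f k - 1) = 0 := by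
  rw [map_sub, map_one, beta_f, sub_self]

/-- `beta` descends to the quotient `B`. -/
def betaBar : B k →+* Aloc k :=
  Ideal.Quotient.lift (Ideal.span {f k - 1}) (beta k).toRingHom (by
    intro a ha
    rw [Ideal.mem_span_singleton] at ha
    obtain ⟨c, rfl⟩ := ha
    simp only [AlgHom.toRingHom_eq_coe, RingHom.coe_coe, map_mul, beta_f_sub_one, zero_mul])

lemma betaBar_mk (a : A k) : betaBar k (Ideal.Quotient.mk _ a) = beta k a := rfl

/-- The inverse map `χ : B[T,T⁻¹] → A[1/f]`. -/
def chi : L k →+* Aloc k :=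
  AddMonoidAlgebra.liftNCRingHom (betaBar k)
    ((Units.coeHom (Aloc k)).comp (zpowersHom (Aloc k)ˣ (fu k)))
    (fun _ _ => Commute.all _ _)

lemma chi_single (n : ℤ) (b : B k) :
    chi k (AddMonoidAlgebra.single n b) = betaBar k b * ((fu k) ^ n : (Aloc k)ˣ) := by
  show AddMonoidAlgebra.liftNC _ _ (AddMonoidAlgebra.single n b) = _
  rw [AddMonoidAlgebra.liftNC_single]
  rfl

lemma chi_T (n : ℤ) : chi k (T n) = ((fu k) ^ n : (Aloc k)ˣ) := by
  rw [show (T n : L k) = AddMonoidAlgebra.single n 1 from rfl, chi_single, map_one, one_mul]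

lemma chi_C (b : B k) : chi k (LaurentPolynomial.C b) = betaBar k b := by
  rw [show (LaurentPolynomial.C b : L k) = AddMonoidAlgebra.single 0 b from rfl, chi_single]
  simp

lemma chi_comp_psi : (chi k).comp (psi k) = RingHom.id (Aloc k) := by
  apply IsLocalization.ringHom_ext (Submonoid.powers (f k))
  rw [RingHom.comp_assoc]
  apply MvPolynomial.ringHom_ext
  · intro c
    simp only [RingHom.comp_apply, RingHom.id_apply, psi_algebraMap]
    rw [show psi0 k (MvPolynomial.C c) = algebraMap k (L k) c from aeval_C _ _,
      LaurentPolynomial.algebraMap_apply, chi_C]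
    rw [show algebraMap k (B k) c = Ideal.Quotient.mk _ (MvPolynomial.C c) from rfl,
      betaBar_mk, show beta k (MvPolynomial.C c) = algebraMap k (Aloc k) c from aeval_C _ _]
    rfl
  · intro i
    fin_cases i
    · show chi k (psi k (algebraMap (A k) (Aloc k) (X 0))) = algebraMap (A k) (Aloc k) (X 0)
      rw [psi_algebraMap]
      rw [show psi0 k (X 0) = T 1 * LaurentPolynomial.C (u k) by
            simp [psi0], map_mul, chi_T, chi_C, betaBar_mk,
          show beta k (X 0) = finv k * algebraMap (A k) (Aloc k) (X 0) by simp [beta]]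
      rw [zpow_one]
      show fimg k * (finv k * _) = _
      rw [← mul_assoc, fmul, one_mul]
    · show chi k (psi k (algebraMap (A k) (Aloc k) (X 1))) = algebraMap (A k) (Aloc k) (X 1)
      rw [psi_algebraMap]
      rw [show psi0 k (X 1) = T (-1) * LaurentPolynomial.C (v k) by
            simp [psi0], map_mul, chi_T, chi_C, betaBar_mk,
          show beta k (X 1) = fimg k * algebraMap (A k) (Aloc k) (X 1) by simp [beta]]
      rw [zpow_neg, zpow_one]
      show (finv k) * (fimg k * _) = _
      rw [← mul_assoc, mul_comm (finv k), fmul, one_mul]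

lemma psi_fimg : psi k (fimg k) = T 1 := by rw [psi_algebraMap, psi0_f]

lemma psi_finv : psi k (finv k) = T (-1) := by
  have h : psi k (finv k) * T 1 = 1 := by
    rw [← psi_fimg, ← map_mul, mul_comm, fmul, map_one]
  have h1 := T_one_mul_T_neg_one k
  linear_combination T (-1) * h - psi k (finv k) * h1

/-- `T` as a unit of `L`. -/
def Tu : (L k)ˣ :=
  ⟨T 1, T (-1), T_one_mul_T_neg_one k, by rw [← T_add]; norm_num⟩

lemma Tu_zpow (n : ℤ) : (((Tu k) ^ n : (L k)ˣ) : L k) = T n := by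
  induction n using Int.induction_on with
  | zero => simp [T_zero]
  | succ n ih =>
      rw [zpow_add_one, Units.val_mul, ih, show ((Tu k : (L k)ˣ) : L k) = T 1 from rfl, ← T_add]
  | pred n ih =>
      rw [zpow_sub_one, Units.val_mul, ih,
        show (((Tu k)⁻¹ : (L k)ˣ) : L k) = T (-1) from rfl, ← T_add, ← sub_eq_add_neg]

lemma units_map_fu : Units.map (psi k : Aloc k →* L k) (fu k) = Tu k :=
  Units.ext (psi_fimg k)

lemma psi_comp_beta :
    (psi k).comp (beta k).toRingHom =
      (LaurentPolynomial.C (R := B k)).comp (Ideal.Quotient.mk (Ideal.span {f k - 1})) := by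
  apply MvPolynomial.ringHom_ext
  · intro c
    simp only [RingHom.comp_apply, AlgHom.toRingHom_eq_coe, RingHom.coe_coe]
    rw [show beta k (MvPolynomial.C c) = algebraMap k (Aloc k) c from aeval_C _ _,
      show algebraMap k (Aloc k) c = algebraMap (A k) (Aloc k) (MvPolynomial.C c) from rfl,
      psi_algebraMap, show psi0 k (MvPolynomial.C c) = algebraMap k (L k) c from aeval_C _ _]
    rfl
  · intro i
    fin_cases i
    · show psi k (beta k (X 0)) = LaurentPolynomial.C (Ideal.Quotient.mk _ (X 0))
      rw [show beta k (X 0) = finv k * algebraMap (A k) (Aloc k) (X 0) by simp [beta],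
        map_mul, psi_finv, psi_algebraMap,
        show psi0 k (X 0) = T 1 * LaurentPolynomial.C (u k) by simp [psi0],
        ← mul_assoc, ← T_add]
      norm_num
    · show psi k (beta k (X 1)) = LaurentPolynomial.C (Ideal.Quotient.mk _ (X 1))
      rw [show beta k (X 1) = fimg k * algebraMap (A k) (Aloc k) (X 1) by simp [beta],
        map_mul, psi_fimg, psi_algebraMap,
        show psi0 k (X 1) = T (-1) * LaurentPolynomial.C (v k) by simp [psi0],
        ← mul_assoc, ← T_add]
      norm_num

lemma psi_comp_chi : (psi k).comp (chi k) = RingHom.id (L k) := by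
  apply AddMonoidAlgebra.ringHom_ext
  · intro b
    obtain ⟨a, rfl⟩ := Ideal.Quotient.mk_surjective b
    simp only [RingHom.comp_apply, RingHom.id_apply]
    rw [show (AddMonoidAlgebra.single (0 : ℤ) (Ideal.Quotient.mk _ a) : L k) =
        LaurentPolynomial.C (Ideal.Quotient.mk _ a) from rfl, chi_C, betaBar_mk]
    exact RingHom.congr_fun (psi_comp_beta k) a
  · intro n
    simp only [RingHom.comp_apply, RingHom.id_apply]
    rw [show (AddMonoidAlgebra.single (n : ℤ) (1 : B k) : L k) = T n from rfl, chi_T]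
    calc psi k ((fu k ^ n : (Aloc k)ˣ) : Aloc k)
        = ((Units.map (psi k : Aloc k →* L k) (fu k ^ n) : (L k)ˣ) : L k) := rfl
      _ = (((Units.map (psi k : Aloc k →* L k) (fu k)) ^ n : (L k)ˣ) : L k) := by
            rw [map_zpow]
      _ = T n := by rw [units_map_fu, Tu_zpow]

/-- The ring isomorphism. -/
def psiEquiv : Aloc k ≃+* L k :=
  RingEquiv.ofRingHom (psi k) (chi k) (psi_comp_chi k) (chi_comp_psi k)

/-- The algebra isomorphism. -/
def psiAlgEquiv : Aloc k ≃ₐ[k] L k :=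
  AlgEquiv.ofRingEquiv (f := psiEquiv k) (fun c => by
    show psi k (algebraMap k (Aloc k) c) = algebraMap k (L k) c
    rw [show algebraMap k (Aloc k) c = algebraMap (A k) (Aloc k) (MvPolynomial.C c) from rfl,
      psi_algebraMap]
    exact aeval_C _ _)

end

end BroughtonAux

/-- Over `𝔾_m` Broughton's map `f = X(XY−1)` is a trivial fibration with fiber the fiber
`X₁` of `f` over `1`: there is a `k`-algebra isomorphism
`k[X,Y][1/f] ≅ (k[X,Y]/(f−1))[T,T⁻¹]` sending the image of `f` to the Laurent variable `T`. -/
theorem stmt_3 (k : Type) [Field k] [CharZero k] :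
    ∃ ψ : Localization.Away (X 0 * (X 0 * X 1 - 1) : MvPolynomial (Fin 2) k) ≃ₐ[k]
        LaurentPolynomial (MvPolynomial (Fin 2) k ⧸
          Ideal.span {(X 0 * (X 0 * X 1 - 1) - 1 : MvPolynomial (Fin 2) k)}),
      ψ (algebraMap (MvPolynomial (Fin 2) k)
          (Localization.Away (X 0 * (X 0 * X 1 - 1) : MvPolynomial (Fin 2) k))
          (X 0 * (X 0 * X 1 - 1))) =
        LaurentPolynomial.T 1 := by
  refine ⟨BroughtonAux.psiAlgEquiv k, ?_⟩
  show BroughtonAux.psi k _ = _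
  rw [BroughtonAux.psi_algebraMap, BroughtonAux.psi0_f]
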